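/- arXiv:2505.02614 — 2 statements merged into one kernel-verified Lean document; each statement's English description precedes it below -/
import Mathlib

section
/- (One-step descent of entropic mirror descent with the Polyak-type stepsize) Let A ∈ ℝ^{m×n}, b ∈ ℝ^m, f(x) = (1/2)‖Ax − b‖₂², and let z ∈ S₊. Let x ∈ ℝ^n_{++} with ∇f(x) ≠ 0, set α = min{ f(x)/‖∇f(x)‖²_x , 1.79/‖∇f(x)‖_∞ } and x⁺ = x ∘ exp(−α ∇f(x)). Then D_h(z, x⁺) − D_h(z, x) ≤ −α·f(x). -/
open Finset Filter

/-- Bregman divergence generated by the negative entropy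
`h(x) = ∑ i, x i * (log (x i) - 1)` (with the convention `0 * log 0 = 0`,
which holds automatically since `Real.log 0 = 0`). -/
noncomputable def Dh {n : ℕ} (x y : Fin n → ℝ) : ℝ :=
  ∑ i, (x i * Real.log (x i / y i) - x i + y i)

/-- ℓ₁-norm of a vector. -/
noncomputable def l1 {n : ℕ} (x : Fin n → ℝ) : ℝ := ∑ i, |x i|

/-- Objective `f(x) = (1/2) ‖Ax - b‖₂²`. -/
noncomputable def fobj {m n : ℕ} (A : Matrix (Fin m) (Fin n) ℝ) (b : Fin m → ℝ)
    (x : Fin n → ℝ) : ℝ := (1 / 2) * ∑ j, ((A.mulVec x - b) j) ^ 2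

/-- Gradient `∇f(x) = Aᵀ (Ax - b)` of `f(x) = (1/2)‖Ax - b‖₂²`. -/
noncomputable def gradf {m n : ℕ} (A : Matrix (Fin m) (Fin n) ℝ) (b : Fin m → ℝ)
    (x : Fin n → ℝ) : Fin n → ℝ := A.transpose.mulVec (A.mulVec x - b)

/-- Maximum norm `‖v‖_∞`. -/
noncomputable def linfty {n : ℕ} [NeZero n] (v : Fin n → ℝ) : ℝ :=
  Finset.univ.sup' Finset.univ_nonempty fun i => |v i|

/-- Weighted squared norm `‖v‖²_x = ∑ i, x i * (v i)²`. -/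
noncomputable def wnormSq {n : ℕ} (x v : Fin n → ℝ) : ℝ := ∑ i, x i * (v i) ^ 2

/-- The Polyak-type stepsize `min { f(x)/‖∇f(x)‖²_x , 1.79/‖∇f(x)‖_∞ }`. -/
noncomputable def polyakStep {m n : ℕ} [NeZero n] (A : Matrix (Fin m) (Fin n) ℝ)
    (b : Fin m → ℝ) (x : Fin n → ℝ) : ℝ :=
  min (fobj A b x / wnormSq x (gradf A b x)) (1.79 / linfty (gradf A b x))

/-- Maximum Euclidean column norm `C_A = max_j ‖A_{:j}‖₂`. -/
noncomputable def colNormMax {m n : ℕ} [NeZero n] (A : Matrix (Fin m) (Fin n) ℝ) : ℝ :=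
  Finset.univ.sup' Finset.univ_nonempty fun j => Real.sqrt (∑ i, (A i j) ^ 2)

lemma exp_quad {s : ℝ} (hs : s ≤ 1.79) : Real.exp s ≤ 1 + s + s ^ 2 := by
  rcases le_or_gt s 0 with h0 | h0
  · have h1 : (0:ℝ) < 1 - s := by linarith
    have h2 : 1 - s ≤ Real.exp (-s) := by
      have := Real.add_one_le_exp (-s); linarith
    have h3 : Real.exp s * (1 - s) ≤ 1 := by
      have := mul_le_mul_of_nonneg_left h2 (Real.exp_pos s).le
      rwa [← Real.exp_add, add_neg_cancel, Real.exp_zero] at this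
    nlinarith [Real.exp_pos s, sq_nonneg s]
  rcases le_or_gt s 1 with h1 | h1
  · have hb := Real.exp_bound' h0.le h1 (n := 3) (by norm_num)
    simp [Finset.sum_range_succ, Nat.factorial] at hb
    nlinarith [mul_nonneg (mul_nonneg h0.le h0.le) (sub_nonneg.mpr h1)]
  · set t := s - 1 with ht
    have ht0 : 0 ≤ t := by simp [ht]; linarith
    have ht1 : t ≤ 0.79 := by simp [ht]; linarith
    have hb := Real.exp_bound' ht0 (by linarith) (n := 5) (by norm_num)
    simp [Finset.sum_range_succ, Nat.factorial] at hb
    have he1 : Real.exp 1 ≤ 2.7182818286 := Real.exp_one_lt_d9.le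
    have hes : Real.exp s = Real.exp 1 * Real.exp t := by
      rw [← Real.exp_add, ht]; ring_nf
    rw [hes]
    have hpt : (0:ℝ) < Real.exp t := Real.exp_pos t
    nlinarith [mul_nonneg (mul_nonneg ht0 ht0) (sub_nonneg.mpr ht1),
      mul_nonneg (mul_nonneg (mul_nonneg ht0 ht0) ht0) (sub_nonneg.mpr ht1),
      mul_nonneg (mul_nonneg (mul_nonneg (mul_nonneg ht0 ht0) ht0) ht0) (sub_nonneg.mpr ht1),
      mul_nonneg ht0 (sub_nonneg.mpr ht1)]

/-- One-step descent of entropic mirror descent with the Polyak-type stepsize: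
with `z ∈ S₊`, `x ∈ ℝⁿ₊₊`, `∇f(x) ≠ 0`,
`α = min { f(x)/‖∇f(x)‖²_x , 1.79/‖∇f(x)‖_∞ }` and `x⁺ = x ∘ exp(-α ∇f(x))`,
one has `D_h(z, x⁺) - D_h(z, x) ≤ -α f(x)`. -/
theorem one_step_descent {m n : ℕ} [NeZero n]
    (A : Matrix (Fin m) (Fin n) ℝ) (b : Fin m → ℝ)
    (z : Fin n → ℝ) (hz : ∀ i, 0 ≤ z i) (hzsol : A.mulVec z = b)
    (x : Fin n → ℝ) (hx : ∀ i, 0 < x i) (hgrad : gradf A b x ≠ 0) :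
    Dh z (fun i => x i * Real.exp (-(polyakStep A b x) * gradf A b x i)) - Dh z x ≤
      -(polyakStep A b x) * fobj A b x := by
  obtain ⟨i0, hi0⟩ := Function.ne_iff.mp hgrad
  simp only [Pi.zero_apply] at hi0
  set g := gradf A b x with hgdef
  set α := polyakStep A b x with hαdef
  set F := fobj A b x with hFdef
  set W := wnormSq x g with hWdef
  set L := linfty g with hLdef
  have hF : 0 ≤ F := by
    rw [hFdef, fobj]; positivity
  have hW : 0 < W := by
    rw [hWdef, wnormSq]
    apply Finset.sum_pos' (fun i _ => mul_nonneg (hx i).le (sq_nonneg _))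
    exact ⟨i0, Finset.mem_univ i0, mul_pos (hx i0) (pow_two_pos_of_ne_zero hi0)⟩
  have hLi : ∀ i, |g i| ≤ L := fun i =>
    Finset.le_sup' (fun i => |g i|) (Finset.mem_univ i)
  have hL : 0 < L := lt_of_lt_of_le (abs_pos.mpr hi0) (hLi i0)
  have hα1 : α ≤ F / W := min_le_left _ _
  have hα2 : α ≤ 1.79 / L := min_le_right _ _
  have hα0 : 0 ≤ α := le_min (div_nonneg hF hW.le) (div_nonneg (by norm_num) hL.le)
  have hαW : α * W ≤ F := (le_div_iff₀ hW).mp hα1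
  have hαL : ∀ i, -(α * g i) ≤ 1.79 := by
    intro i
    have h1 : α * |g i| ≤ α * L := mul_le_mul_of_nonneg_left (hLi i) hα0
    have h2 : α * L ≤ 1.79 := (le_div_iff₀ hL).mp hα2
    have h3 : -(α * g i) ≤ α * |g i| := by
      calc -(α * g i) ≤ |α * g i| := neg_le_abs _
        _ = |α| * |g i| := abs_mul _ _
        _ = α * |g i| := by rw [abs_of_nonneg hα0]
    linarith
  have hexp : ∀ i, Real.exp (-α * g i) ≤ 1 - α * g i + (α * g i) ^ 2 := by
    intro i
    have := exp_quad (s := -α * g i) (by rw [neg_mul]; exact hαL i)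
    nlinarith [this]
  -- Step 1: rewrite the Bregman difference
  have hstep1 : Dh z (fun i => x i * Real.exp (-α * g i)) - Dh z x =
      ∑ i, (z i * (α * g i) + x i * (Real.exp (-α * g i) - 1)) := by
    rw [Dh, Dh, ← Finset.sum_sub_distrib]
    apply Finset.sum_congr rfl
    intro i _
    rcases (hz i).eq_or_lt with h0 | h0
    · simp [← h0]; ring
    · rw [Real.log_div (ne_of_gt h0) (ne_of_gt (mul_pos (hx i) (Real.exp_pos _))),
        Real.log_div (ne_of_gt h0) (ne_of_gt (hx i)),
        Real.log_mul (ne_of_gt (hx i)) (Real.exp_ne_zero _), Real.log_exp]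
      ring
  -- Step 2: termwise bound
  have hstep2 : ∑ i, (z i * (α * g i) + x i * (Real.exp (-α * g i) - 1)) ≤
      ∑ i, (z i * (α * g i) + x i * (-(α * g i) + (α * g i) ^ 2)) := by
    apply Finset.sum_le_sum
    intro i _
    have h1 : x i * (Real.exp (-α * g i) - 1) ≤ x i * (-(α * g i) + (α * g i) ^ 2) :=
      mul_le_mul_of_nonneg_left (by have := hexp i; linarith) (hx i).le
    linarith
  -- Step 3: sum identity
  have hstep3 : ∑ i, (z i * (α * g i) + x i * (-(α * g i) + (α * g i) ^ 2)) =
      α * (∑ i, g i * (z i - x i)) + α ^ 2 * W := by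
    rw [hWdef, wnormSq, Finset.mul_sum, Finset.mul_sum, ← Finset.sum_add_distrib]
    apply Finset.sum_congr rfl
    intro i _
    ring
  -- Step 4: linear algebra identity
  have hstep4 : ∑ i, g i * (z i - x i) = -2 * F := by
    have h1 : ∑ i, g i * (z i - x i) = dotProduct g (z - x) := by
      simp [dotProduct]
    have h2 : dotProduct g (z - x) = dotProduct (A.mulVec x - b) (b - A.mulVec x) := by
      rw [hgdef, gradf, Matrix.mulVec_transpose, ← Matrix.dotProduct_mulVec,
        Matrix.mulVec_sub, hzsol]
    have h3 : dotProduct (A.mulVec x - b) (b - A.mulVec x) = -2 * F := by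
      rw [hFdef, fobj]
      have hterm : ∀ j ∈ Finset.univ, ((A.mulVec x - b) j) * ((b - A.mulVec x) j)
          = -(((A.mulVec x - b) j) ^ 2) := fun j _ => by
        simp only [Pi.sub_apply]; ring
      calc dotProduct (A.mulVec x - b) (b - A.mulVec x)
          = ∑ j, ((A.mulVec x - b) j) * ((b - A.mulVec x) j) := rfl
        _ = ∑ j, -(((A.mulVec x - b) j) ^ 2) := Finset.sum_congr rfl hterm
        _ = -∑ j, ((A.mulVec x - b) j) ^ 2 := by rw [Finset.sum_neg_distrib]
        _ = -2 * ((1 / 2) * ∑ j, ((A.mulVec x - b) j) ^ 2) := by ring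
    rw [h1, h2, h3]
  -- conclude
  have hαsq : α * (α * W) ≤ α * F := mul_le_mul_of_nonneg_left hαW hα0
  calc Dh z (fun i => x i * Real.exp (-α * g i)) - Dh z x
      = ∑ i, (z i * (α * g i) + x i * (Real.exp (-α * g i) - 1)) := hstep1
    _ ≤ α * (∑ i, g i * (z i - x i)) + α ^ 2 * W := by rw [← hstep3]; exact hstep2
    _ = α * (-2 * F) + α ^ 2 * W := by rw [hstep4]
    _ ≤ -α * F := by nlinarith
end

section
/- (Convergence of Hadamard descent+) Let A ∈ ℝ^{m×n} with A ≠ 0 and b ∈ ℝ^m be such that S₊ is nonempty, and let f(x) = (1/2)‖Ax − b‖₂². Let x₀ ∈ ℝ^n_{++} and define recursively x_{k+1} = x_k ∘ ( 1 − α_k ∇f(x_k) + α_k² ∇f(x_k)² ) (componentwise), with α_k = min{ f(x_k)/‖∇f(x_k)‖²_{x_k} , 1.79/‖∇f(x_k)‖_∞ }, assuming ∇f(x_k) ≠ 0 for all k. Then (x_k) converges to some x* ∈ S₊, and for every k ∈ ℕ, min_{0≤i≤k} f(x_i) ≤ 4·R·(R + ‖x*‖₁)·C_A² / (k+1), where R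 = D_h(x*, x₀) and C_A = max_{1≤j≤n} ‖A_{:j}‖₂ is the maximum Euclidean column norm of A. -/
open Finset Filter

set_option linter.unusedSectionVars false

section Basics
variable {m n : ℕ} [NeZero n] (A : Matrix (Fin m) (Fin n) ℝ) (b : Fin m → ℝ)

lemma fobj_nonneg (x : Fin n → ℝ) : 0 ≤ fobj A b x := by
  unfold fobj; positivity

lemma gradf_apply (x : Fin n → ℝ) (i : Fin n) :
    gradf A b x i = ∑ j, A j i * (A.mulVec x - b) j := by
  unfold gradf Matrix.mulVec dotProduct
  simp [Matrix.transpose_apply]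

lemma fobj_pos (x : Fin n → ℝ) (h : gradf A b x ≠ 0) : 0 < fobj A b x := by
  have h0 : A.mulVec x - b ≠ 0 := by
    intro hr
    apply h
    funext i
    rw [gradf_apply]
    apply Finset.sum_eq_zero
    intro j _
    have hj := congrFun hr j
    simp only [Pi.sub_apply, Pi.zero_apply] at hj ⊢
    rw [hj, mul_zero]
  obtain ⟨j, hj⟩ := Function.ne_iff.mp h0
  simp only [Pi.zero_apply] at hj
  have hj' : (0:ℝ) < ((A.mulVec x - b) j)^2 := by
    have := abs_pos.mpr hj
    nlinarith [sq_abs ((A.mulVec x - b) j)]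
  have : ((A.mulVec x - b) j)^2 ≤ ∑ j', ((A.mulVec x - b) j')^2 :=
    Finset.single_le_sum (f := fun j' => ((A.mulVec x - b) j')^2)
      (fun j' _ => sq_nonneg _) (mem_univ j)
  unfold fobj
  linarith

lemma residual_sq (x : Fin n → ℝ) :
    ∑ j, ((A.mulVec x - b) j)^2 = 2 * fobj A b x := by
  unfold fobj; ring

lemma wnormSq_pos (x v : Fin n → ℝ) (hx : ∀ i, 0 < x i) (hv : v ≠ 0) :
    0 < wnormSq x v := by
  obtain ⟨i, hi⟩ := Function.ne_iff.mp hv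
  simp only [Pi.zero_apply] at hi
  have hvi : (0:ℝ) < (v i)^2 := by
    have := abs_pos.mpr hi; nlinarith [sq_abs (v i)]
  unfold wnormSq
  exact Finset.sum_pos' (fun j _ => mul_nonneg (hx j).le (sq_nonneg _))
    ⟨i, mem_univ i, mul_pos (hx i) hvi⟩

lemma linfty_ge (v : Fin n → ℝ) (i : Fin n) : |v i| ≤ linfty v := by
  unfold linfty
  exact Finset.le_sup' (fun i => |v i|) (mem_univ i)

lemma linfty_pos (v : Fin n → ℝ) (hv : v ≠ 0) : 0 < linfty v := by
  obtain ⟨i, hi⟩ := Function.ne_iff.mp hv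
  simp only [Pi.zero_apply] at hi
  exact lt_of_lt_of_le (abs_pos.mpr hi) (linfty_ge v i)

lemma colNormMax_nonneg : 0 ≤ colNormMax A := by
  obtain ⟨j, _⟩ := Finset.univ_nonempty (α := Fin n)
  unfold colNormMax
  exact le_trans (Real.sqrt_nonneg _)
    (Finset.le_sup' (fun j => Real.sqrt (∑ i, (A i j) ^ 2)) (mem_univ j))

lemma col_sq_le (j : Fin n) : ∑ i, (A i j)^2 ≤ colNormMax A ^ 2 := by
  have h1 : Real.sqrt (∑ i, (A i j)^2) ≤ colNormMax A := by
    unfold colNormMax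
    exact Finset.le_sup' (fun j => Real.sqrt (∑ i, (A i j) ^ 2)) (mem_univ j)
  have h0 : (0:ℝ) ≤ ∑ i, (A i j)^2 := by positivity
  nlinarith [Real.sq_sqrt h0, Real.sqrt_nonneg (∑ i, (A i j)^2)]

lemma colNormMax_pos (hA : A ≠ 0) : 0 < colNormMax A := by
  have : ∃ i j, A i j ≠ 0 := by
    by_contra hc
    push_neg at hc
    exact hA (by ext i j; exact hc i j)
  obtain ⟨i, j, hij⟩ := this
  have h1 : (0:ℝ) < (A i j)^2 := by
    have := abs_pos.mpr hij; nlinarith [sq_abs (A i j)]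
  have h2 : (A i j)^2 ≤ ∑ i', (A i' j)^2 :=
    Finset.single_le_sum (f := fun i' => (A i' j)^2) (fun i' _ => sq_nonneg _) (mem_univ i)
  have h3 : (0:ℝ) < Real.sqrt (∑ i', (A i' j)^2) := Real.sqrt_pos.mpr (by linarith)
  unfold colNormMax
  exact lt_of_lt_of_le h3
    (Finset.le_sup' (fun j => Real.sqrt (∑ i, (A i j) ^ 2)) (mem_univ j))

lemma gradsq_le (x : Fin n → ℝ) (j : Fin n) :
    (gradf A b x j)^2 ≤ colNormMax A ^ 2 * (2 * fobj A b x) := by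
  rw [gradf_apply]
  calc (∑ i, A i j * (A.mulVec x - b) i)^2
      ≤ (∑ i, (A i j)^2) * (∑ i, ((A.mulVec x - b) i)^2) :=
        Finset.sum_mul_sq_le_sq_mul_sq univ _ _
    _ ≤ colNormMax A ^ 2 * (2 * fobj A b x) := by
        rw [residual_sq]
        apply mul_le_mul_of_nonneg_right (col_sq_le A j)
        have := fobj_nonneg A b x; linarith

lemma linfty_grad_le (x : Fin n → ℝ) :
    linfty (gradf A b x) ≤ colNormMax A * Real.sqrt (2 * fobj A b x) := by
  apply Finset.sup'_le
  intro j _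
  have h1 := gradsq_le A b x j
  have hC := colNormMax_nonneg A (m := m)
  have hf := fobj_nonneg A b x
  calc |gradf A b x j| = Real.sqrt ((gradf A b x j)^2) := (Real.sqrt_sq_eq_abs _).symm
    _ ≤ Real.sqrt (colNormMax A ^ 2 * (2 * fobj A b x)) := Real.sqrt_le_sqrt h1
    _ = colNormMax A * Real.sqrt (2 * fobj A b x) := by
        rw [Real.sqrt_mul (by positivity), Real.sqrt_sq hC]

lemma wnormSq_grad_le (x : Fin n → ℝ) (hx : ∀ i, 0 ≤ x i) :
    wnormSq x (gradf A b x) ≤ 2 * colNormMax A ^ 2 * (∑ i, x i) * fobj A b x := by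
  unfold wnormSq
  calc ∑ i, x i * (gradf A b x i)^2
      ≤ ∑ i, x i * (colNormMax A ^ 2 * (2 * fobj A b x)) :=
        Finset.sum_le_sum fun i _ => mul_le_mul_of_nonneg_left (gradsq_le A b x i) (hx i)
    _ = 2 * colNormMax A ^ 2 * (∑ i, x i) * fobj A b x := by
        rw [← Finset.sum_mul]; ring

lemma Dh_term_nonneg {z xi : ℝ} (hz : 0 ≤ z) (hx : 0 < xi) :
    0 ≤ z * Real.log (z / xi) - z + xi := by
  rcases eq_or_lt_of_le hz with h | h
  · simp [← h]; linarith
  · have hlog : Real.log (xi / z) ≤ xi / z - 1 :=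
      Real.log_le_sub_one_of_pos (by positivity)
    have hrw : Real.log (z / xi) = - Real.log (xi / z) := by
      rw [← Real.log_inv]; congr 1; field_simp
    have hzx : z * (xi / z) = xi := by field_simp
    rw [hrw]
    nlinarith [mul_le_mul_of_nonneg_left hlog h.le]

lemma Dh_nonneg (z x : Fin n → ℝ) (hz : ∀ i, 0 ≤ z i) (hx : ∀ i, 0 < x i) :
    0 ≤ Dh z x := by
  unfold Dh
  exact Finset.sum_nonneg fun i _ => Dh_term_nonneg (hz i) (hx i)

lemma Dh_term_le (z x : Fin n → ℝ) (hz : ∀ i, 0 ≤ z i) (hx : ∀ i, 0 < x i) (i : Fin n) :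
    z i * Real.log (z i / x i) - z i + x i ≤ Dh z x := by
  unfold Dh
  exact Finset.single_le_sum (fun j _ => Dh_term_nonneg (hz j) (hx j)) (mem_univ i)

lemma log_le_half {u : ℝ} (hu : 0 < u) : Real.log u ≤ u / 2 := by
  have h1 : Real.log u = 2 * Real.log (Real.sqrt u) := by
    rw [Real.log_sqrt hu.le]; ring
  have h2 : Real.log (Real.sqrt u) ≤ Real.sqrt u - 1 :=
    Real.log_le_sub_one_of_pos (Real.sqrt_pos.mpr hu)
  have h3 : (0:ℝ) ≤ (Real.sqrt u - 2)^2 := sq_nonneg _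
  have h4 : Real.sqrt u ^ 2 = u := Real.sq_sqrt hu.le
  nlinarith

lemma l1_bound (z x : Fin n → ℝ) (hz : ∀ i, 0 ≤ z i) (hx : ∀ i, 0 < x i) :
    ∑ i, x i ≤ 2 * (Dh z x + ∑ i, z i) := by
  have key : ∀ i, x i ≤ 2 * ((z i * Real.log (z i / x i) - z i + x i) + z i) := by
    intro i
    rcases eq_or_lt_of_le (hz i) with h | h
    · simp [← h]; linarith [(hx i).le]
    · have hlog : Real.log (x i / z i) ≤ (x i / z i) / 2 := log_le_half (div_pos (hx i) h)
      have hrw : Real.log (z i / x i) = - Real.log (x i / z i) := by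
        rw [← Real.log_inv]; congr 1; field_simp
      have hzx : z i * (x i / z i) = x i := by field_simp
      rw [hrw]
      nlinarith [mul_le_mul_of_nonneg_left hlog h.le]
  calc ∑ i, x i ≤ ∑ i, 2 * ((z i * Real.log (z i / x i) - z i + x i) + z i) :=
        Finset.sum_le_sum fun i _ => key i
    _ = 2 * (Dh z x + ∑ i, z i) := by
        unfold Dh
        rw [← Finset.mul_sum, Finset.sum_add_distrib]

end Basics

open Real

lemma exp_179_lt : Real.exp 1.79 < 5.9941 := by
  have h1 : (1.0021:ℝ) ≤ Real.exp 0.0021 := by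
    have := Real.add_one_le_exp (0.0021:ℝ); linarith
  have h2 : (1.0021:ℝ)^(100:ℕ) ≤ Real.exp 0.21 := by
    calc (1.0021:ℝ)^(100:ℕ) ≤ (Real.exp 0.0021)^(100:ℕ) :=
          pow_le_pow_left₀ (by norm_num) h1 100
      _ = Real.exp (0.0021*(100:ℕ)) := by
          rw [← Real.exp_nat_mul]; ring_nf
      _ = Real.exp 0.21 := by norm_num
  have h3 : Real.exp 1.79 * Real.exp 0.21 = Real.exp 1 ^ 2 := by
    rw [← Real.exp_add, sq, ← Real.exp_add]; norm_num
  have h4 : Real.exp 1 < 2.7182818286 := Real.exp_one_lt_d9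
  have h5 : Real.exp 1 ^ 2 < 2.7182818286^2 := by
    have := Real.exp_pos 1
    nlinarith
  have hp : (0:ℝ) < (1.0021:ℝ)^(100:ℕ) := by positivity
  have key : Real.exp 1.79 * (1.0021:ℝ)^(100:ℕ) < 5.9941 * (1.0021:ℝ)^(100:ℕ) := by
    have e179 := (Real.exp_pos 1.79).le
    calc Real.exp 1.79 * (1.0021:ℝ)^(100:ℕ) ≤ Real.exp 1.79 * Real.exp 0.21 :=
          mul_le_mul_of_nonneg_left h2 e179
      _ = Real.exp 1 ^ 2 := h3
      _ < 2.7182818286^2 := h5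
      _ ≤ 5.9941 * (1.0021:ℝ)^(100:ℕ) := by norm_num
  exact lt_of_mul_lt_mul_right key hp.le

lemma exp_le_quad : ∀ s : ℝ, 0 ≤ s → s ≤ 1.79 → Real.exp s ≤ 1 + s + s^2 := by
  have hderiv : ∀ s : ℝ, HasDerivAt (fun t : ℝ => (1+t+t^2) * Real.exp (-t))
      ((s - s^2) * Real.exp (-s)) s := by
    intro s
    have hp : HasDerivAt (fun t:ℝ => 1+t+t^2) (1+2*s) s := by
      have h1 : HasDerivAt (fun t:ℝ => 1+t) 1 s := (hasDerivAt_id s).const_add 1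
      have h2 : HasDerivAt (fun t:ℝ => t^2) (2*s) s := by simpa using hasDerivAt_pow 2 s
      exact h1.add h2
    have he : HasDerivAt (fun t:ℝ => Real.exp (-t)) (-Real.exp (-s)) s := by
      have := (Real.hasDerivAt_exp (-s)).comp s (hasDerivAt_neg s)
      simp only [mul_neg, mul_one] at this
      exact this
    have := hp.mul he
    exact this.congr_deriv (by ring)
  have hcont : ∀ D : Set ℝ, ContinuousOn (fun t : ℝ => (1+t+t^2) * Real.exp (-t)) D := by
    intro D
    exact ((continuous_const.add continuous_id).add (continuous_pow 2)).continuousOn.mul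
      (Real.continuous_exp.comp continuous_neg).continuousOn
  have hmono : MonotoneOn (fun t : ℝ => (1+t+t^2) * Real.exp (-t)) (Set.Icc 0 1) := by
    apply monotoneOn_of_deriv_nonneg (convex_Icc 0 1) (hcont _)
    · exact fun x _ => (hderiv x).differentiableAt.differentiableWithinAt
    · intro x hx
      rw [interior_Icc] at hx
      rw [(hderiv x).deriv]
      have he := Real.exp_pos (-x)
      have h1 : (0:ℝ) < x * (1 - x) := mul_pos hx.1 (by linarith [hx.2])
      nlinarith [mul_pos he h1]
  have hanti : AntitoneOn (fun t : ℝ => (1+t+t^2) * Real.exp (-t)) (Set.Icc 1 1.79) := by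
    apply antitoneOn_of_deriv_nonpos (convex_Icc 1 1.79) (hcont _)
    · exact fun x _ => (hderiv x).differentiableAt.differentiableWithinAt
    · intro x hx
      rw [interior_Icc] at hx
      rw [(hderiv x).deriv]
      have he := Real.exp_pos (-x)
      have h1 : (0:ℝ) < x * (x - 1) := mul_pos (by linarith [hx.1]) (by linarith [hx.1])
      nlinarith [mul_pos he h1]
  intro s hs0 hs1
  have key : 1 ≤ (1+s+s^2) * Real.exp (-s) := by
    rcases le_total s 1 with h | h
    · have := hmono (Set.mem_Icc.mpr ⟨le_refl 0, by norm_num⟩) (Set.mem_Icc.mpr ⟨hs0, h⟩) hs0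
      simpa using this
    · have h2 := hanti (Set.mem_Icc.mpr ⟨h, hs1⟩) (Set.mem_Icc.mpr ⟨by norm_num, le_refl _⟩) hs1
      have : (1:ℝ) ≤ (1+1.79+1.79^2) * Real.exp (-1.79) := by
        rw [Real.exp_neg]
        have he := Real.exp_pos (1.79:ℝ)
        have hinv : Real.exp (1.79:ℝ) * (Real.exp (1.79:ℝ))⁻¹ = 1 := mul_inv_cancel₀ he.ne'
        have hle : Real.exp (1.79:ℝ) ≤ 1+1.79+1.79^2 := by nlinarith [exp_179_lt]
        nlinarith [mul_le_mul_of_nonneg_right hle (inv_nonneg.mpr he.le)]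
      calc (1:ℝ) ≤ (1+1.79+1.79^2) * Real.exp (-1.79) := this
        _ ≤ (1+s+s^2) * Real.exp (-s) := h2
  have hepos := Real.exp_pos s
  have : Real.exp s * 1 ≤ Real.exp s * ((1+s+s^2) * Real.exp (-s)) :=
    mul_le_mul_of_nonneg_left key hepos.le
  rw [mul_one] at this
  calc Real.exp s ≤ Real.exp s * ((1+s+s^2) * Real.exp (-s)) := this
    _ = (1+s+s^2) * (Real.exp s * Real.exp (-s)) := by ring
    _ = 1+s+s^2 := by rw [← Real.exp_add]; simp

lemma key_log_ineq : ∀ t : ℝ, |t| ≤ 1.79 → -t ≤ Real.log (1 - t + t^2) := by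
  intro t ht
  have hpos : (0:ℝ) < 1 - t + t^2 := by nlinarith [sq_nonneg (t-1)]
  rw [Real.le_log_iff_exp_le hpos]
  rcases le_total 0 t with h | h
  · -- t ≥ 0 : exp(-t) ≤ 1/(1+t) ≤ 1 - t + t²
    have h1 : (1:ℝ) + t ≤ Real.exp t := by have := Real.add_one_le_exp t; linarith
    have h2 : Real.exp (-t) * (1+t) ≤ 1 := by
      rw [Real.exp_neg]
      have hept := Real.exp_pos t
      rw [inv_mul_le_iff₀ hept]
      linarith
    have hept := Real.exp_pos (-t)
    nlinarith [hept.le, sq_nonneg t]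
  · have habs : -t ≤ 1.79 := by rw [abs_le] at ht; linarith
    have := exp_le_quad (-t) (by linarith) habs
    calc Real.exp (-t) ≤ 1 + (-t) + (-t)^2 := this
      _ = 1 - t + t^2 := by ring

section Descent
variable {m n : ℕ} [NeZero n] (A : Matrix (Fin m) (Fin n) ℝ) (b : Fin m → ℝ)

lemma step_pos (x : Fin n → ℝ) (hx : ∀ i, 0 < x i) (hg : gradf A b x ≠ 0) :
    0 < polyakStep A b x := by
  unfold polyakStep
  exact lt_min (div_pos (fobj_pos A b x hg) (wnormSq_pos x _ hx hg))
    (div_pos (by norm_num) (linfty_pos _ hg))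

lemma step_mul_wnorm_le (x : Fin n → ℝ) (hx : ∀ i, 0 < x i) (hg : gradf A b x ≠ 0) :
    polyakStep A b x * wnormSq x (gradf A b x) ≤ fobj A b x := by
  have hw := wnormSq_pos x _ hx hg
  rw [← le_div_iff₀ hw]
  unfold polyakStep
  exact min_le_left _ _

lemma step_mul_linfty_le (x : Fin n → ℝ) (hg : gradf A b x ≠ 0) :
    polyakStep A b x * linfty (gradf A b x) ≤ 1.79 := by
  have hl := linfty_pos _ hg
  have h := min_le_right (fobj A b x / wnormSq x (gradf A b x)) (1.79 / linfty (gradf A b x))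
  rw [← le_div_iff₀ hl]
  exact h

lemma grad_dot_eq (x z : Fin n → ℝ) (hzb : A.mulVec z = b) :
    ∑ i, gradf A b x i * (x i - z i) = 2 * fobj A b x := by
  have key : ∀ j, ∑ i, A j i * (x i - z i) = (A.mulVec x - b) j := by
    intro j
    have : A.mulVec z j = b j := congrFun hzb j
    simp only [Pi.sub_apply]
    rw [← this]
    unfold Matrix.mulVec dotProduct
    rw [← Finset.sum_sub_distrib]
    exact Finset.sum_congr rfl fun i _ => by ring
  calc ∑ i, gradf A b x i * (x i - z i)
      = ∑ i, ∑ j, A j i * (A.mulVec x - b) j * (x i - z i) := by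
        refine Finset.sum_congr rfl fun i _ => ?_
        rw [gradf_apply, Finset.sum_mul]
    _ = ∑ j, ∑ i, A j i * (A.mulVec x - b) j * (x i - z i) := Finset.sum_comm
    _ = ∑ j, (A.mulVec x - b) j * ∑ i, A j i * (x i - z i) := by
        refine Finset.sum_congr rfl fun j _ => ?_
        rw [Finset.mul_sum]
        exact Finset.sum_congr rfl fun i _ => by ring
    _ = ∑ j, (A.mulVec x - b) j * (A.mulVec x - b) j := by
        refine Finset.sum_congr rfl fun j _ => by rw [key j]
    _ = ∑ j, ((A.mulVec x - b) j)^2 := Finset.sum_congr rfl fun j _ => (sq _).symm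
    _ = 2 * fobj A b x := residual_sq A b x

lemma descent_step (x z : Fin n → ℝ) (hz : ∀ i, 0 ≤ z i) (hzb : A.mulVec z = b)
    (hx : ∀ i, 0 < x i) (hg : gradf A b x ≠ 0) :
    Dh z (fun i => x i * (1 - polyakStep A b x * gradf A b x i
        + polyakStep A b x ^ 2 * (gradf A b x i) ^ 2))
      ≤ Dh z x - polyakStep A b x * fobj A b x := by
  set α := polyakStep A b x with hα
  set g := gradf A b x with hgdef
  have hα0 : 0 < α := step_pos A b x hx hg
  have hαl : α * linfty g ≤ 1.79 := step_mul_linfty_le A b x hg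
  have hαw : α * wnormSq x g ≤ fobj A b x := step_mul_wnorm_le A b x hx hg
  have ht : ∀ i, |α * g i| ≤ 1.79 := by
    intro i
    rw [abs_mul, abs_of_pos hα0]
    calc α * |g i| ≤ α * linfty g := mul_le_mul_of_nonneg_left (linfty_ge g i) hα0.le
      _ ≤ 1.79 := hαl
  have hufactor : ∀ i, 1 - α * g i + α^2 * (g i)^2 = 1 - (α * g i) + (α * g i)^2 := by
    intro i; ring
  have hu_pos : ∀ i, 0 < 1 - α * g i + α^2 * (g i)^2 := by
    intro i
    rw [hufactor i]
    nlinarith [sq_nonneg (α * g i - 1)]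
  have hlog : ∀ i, -(α * g i) ≤ Real.log (1 - α * g i + α^2 * (g i)^2) := by
    intro i
    rw [hufactor i]
    exact key_log_ineq _ (ht i)
  -- per-term bound on log part
  have hterm : ∀ i, z i * Real.log (z i / (x i * (1 - α * g i + α^2 * (g i)^2)))
      ≤ z i * Real.log (z i / x i) + z i * (α * g i) := by
    intro i
    rcases eq_or_lt_of_le (hz i) with h | h
    · rw [← h]; simp
    · set u := 1 - α * g i + α^2 * (g i)^2 with hu
      have hupos := hu_pos i
      have hxi := hx i
      have hzi := h
      have hsplit : Real.log (z i / (x i * u)) = Real.log (z i / x i) - Real.log u := by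
        rw [Real.log_div hzi.ne' (by positivity), Real.log_div hzi.ne' hxi.ne',
          Real.log_mul hxi.ne' hupos.ne']
        ring
      rw [hsplit]
      have := mul_le_mul_of_nonneg_left (hlog i) hzi.le
      nlinarith [this]
  -- assemble
  unfold Dh
  have hsum : ∑ i, (z i * Real.log (z i / (x i * (1 - α * g i + α^2 * (g i)^2))) - z i
        + x i * (1 - α * g i + α^2 * (g i)^2))
      ≤ ∑ i, ((z i * Real.log (z i / x i) - z i + x i)
        + (α * (z i * g i) - α * (x i * g i) + α^2 * (x i * (g i)^2))) := by
    apply Finset.sum_le_sum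
    intro i _
    have := hterm i
    nlinarith [this]
  refine le_trans hsum ?_
  rw [Finset.sum_add_distrib]
  have expand : ∑ i, (α * (z i * g i) - α * (x i * g i) + α^2 * (x i * (g i)^2))
      = -(α * (2 * fobj A b x)) + α^2 * wnormSq x g := by
    have hdot := grad_dot_eq A b x z hzb
    unfold wnormSq
    calc ∑ i, (α * (z i * g i) - α * (x i * g i) + α^2 * (x i * (g i)^2))
        = ∑ i, (-(α * (g i * (x i - z i))) + α^2 * (x i * (g i)^2)) :=
          Finset.sum_congr rfl fun i _ => by ring
      _ = -(α * ∑ i, g i * (x i - z i)) + α^2 * ∑ i, x i * (g i)^2 := by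
          rw [Finset.sum_add_distrib, Finset.sum_neg_distrib, ← Finset.mul_sum, ← Finset.mul_sum]
      _ = -(α * (2 * fobj A b x)) + α^2 * ∑ i, x i * (g i)^2 := by rw [hdot]
  rw [expand]
  have hsq : α^2 * wnormSq x g ≤ α * fobj A b x := by
    have := mul_le_mul_of_nonneg_left hαw hα0.le
    nlinarith [this]
  have hf := fobj_nonneg A b x
  linarith

lemma key_est (hA : A ≠ 0) (x : Fin n → ℝ) (hx : ∀ i, 0 < x i)
    (hg : gradf A b x ≠ 0) (M : ℝ) (hM : ∑ i, x i ≤ M) :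
    fobj A b x ≤ max (2 * colNormMax A ^ 2 * M * (polyakStep A b x * fobj A b x))
      (2 * colNormMax A ^ 2 / 1.79^2 * (polyakStep A b x * fobj A b x)^2) := by
  set C := colNormMax A with hC
  set f := fobj A b x with hf
  set g := gradf A b x with hgdef
  have hC0 : 0 < C := colNormMax_pos A hA
  have hf0 : 0 < f := fobj_pos A b x hg
  have hw0 : 0 < wnormSq x g := wnormSq_pos x g hx hg
  have hl0 : 0 < linfty g := linfty_pos g hg
  have hwle : wnormSq x g ≤ 2 * C^2 * M * f := by
    calc wnormSq x g ≤ 2 * C^2 * (∑ i, x i) * f := wnormSq_grad_le A b x (fun i => (hx i).le)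
      _ ≤ 2 * C^2 * M * f := by
          have h2 : (0:ℝ) ≤ 2 * C^2 := by positivity
          nlinarith [hf0.le, mul_le_mul_of_nonneg_left hM h2]
  unfold polyakStep
  rw [← hf, ← hgdef]
  rcases le_total (f / wnormSq x g) (1.79 / linfty g) with h | h
  · rw [min_eq_left h]
    apply le_max_of_le_left
    have key : f * f ≤ (f / wnormSq x g * f) * (2 * C^2 * M * f) := by
      rw [div_mul_eq_mul_div, div_mul_eq_mul_div, le_div_iff₀ hw0]
      calc f * f * wnormSq x g ≤ f * f * (2 * C^2 * M * f) :=
            mul_le_mul_of_nonneg_left hwle (by positivity)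
        _ = f * f * (2 * C^2 * M * f) := rfl
    have := le_of_mul_le_mul_right (by nlinarith [key] : f * f ≤ (2 * C^2 * M * (f / wnormSq x g * f)) * f) hf0
    linarith
  · rw [min_eq_right h]
    apply le_max_of_le_right
    set u := 1.79 / linfty g * f with hu
    have hu0 : 0 < u := by positivity
    have hlinf : linfty g ≤ C * Real.sqrt (2 * f) := linfty_grad_le A b x
    have hul : u * linfty g = 1.79 * f := by
      rw [hu]; field_simp
    have h179 : (1.79:ℝ) * f ≤ u * (C * Real.sqrt (2 * f)) := by
      rw [← hul]
      exact mul_le_mul_of_nonneg_left hlinf hu0.le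
    have hsq2f : Real.sqrt (2*f) ^ 2 = 2 * f := Real.sq_sqrt (by linarith)
    have hsq : (1.79:ℝ)^2 * f^2 ≤ u^2 * (C^2 * (2*f)) := by
      have h1 : (0:ℝ) ≤ 1.79 * f := by linarith
      have hms := mul_self_le_mul_self h1 h179
      calc (1.79:ℝ)^2 * f^2 = (1.79*f)*(1.79*f) := by ring
        _ ≤ (u*(C*Real.sqrt (2*f)))*(u*(C*Real.sqrt (2*f))) := hms
        _ = u^2*C^2*(Real.sqrt (2*f)^2) := by ring
        _ = u^2 * (C^2 * (2*f)) := by rw [hsq2f]; ring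
    have h2 : (1.79:ℝ)^2 * f ≤ 2*C^2*u^2 := by nlinarith [hsq, hf0]
    rw [div_mul_eq_mul_div, le_div_iff₀ (by norm_num : (0:ℝ) < (1.79:ℝ)^2)]
    linarith

end Descent

section Ga

lemma ga_anti {a y1 y2 : ℝ} (h1 : 0 < y1) (h12 : y1 ≤ y2) (h2a : y2 ≤ a) :
    a * Real.log (a / y2) - a + y2 ≤ a * Real.log (a / y1) - a + y1 := by
  have h20 : 0 < y2 := lt_of_lt_of_le h1 h12
  have ha : 0 < a := lt_of_lt_of_le h20 h2a
  have hlog : Real.log (y1 / y2) ≤ y1 / y2 - 1 := Real.log_le_sub_one_of_pos (by positivity)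
  have hsplit : Real.log (a / y1) - Real.log (a / y2) = - Real.log (y1 / y2) := by
    rw [Real.log_div ha.ne' h1.ne', Real.log_div ha.ne' h20.ne', Real.log_div h1.ne' h20.ne']
    ring
  have hfrac : y1 / y2 - 1 = (y1 - y2) / y2 := by field_simp
  -- a * (log(a/y1) - log(a/y2)) ≥ a * (1 - y1/y2) = a (y2-y1)/y2 ≥ y2 - y1
  have key : a * ((y2 - y1) / y2) ≥ y2 - y1 := by
    rw [ge_iff_le, ← sub_nonneg]
    have : a * ((y2 - y1) / y2) - (y2 - y1) = (y2 - y1) * ((a - y2) / y2) := by field_simp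
    rw [this]
    apply mul_nonneg (by linarith) (div_nonneg (by linarith) h20.le)
  have hmul := mul_le_mul_of_nonneg_left hlog ha.le
  have h4 : a * Real.log (a / y1) - a * Real.log (a / y2) = -(a * Real.log (y1 / y2)) := by
    have := congrArg (fun t => a * t) hsplit
    simp only [mul_sub] at this
    linarith [this]
  have h6 : a * (y1 / y2 - 1) + a * ((y2 - y1) / y2) = 0 := by
    field_simp
    ring
  linarith [key, h4, hmul, h6]

lemma ga_mono {a y1 y2 : ℝ} (ha : 0 < a) (h1 : a ≤ y1) (h12 : y1 ≤ y2) :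
    a * Real.log (a / y1) - a + y1 ≤ a * Real.log (a / y2) - a + y2 := by
  have h10 : 0 < y1 := lt_of_lt_of_le ha h1
  have h20 : 0 < y2 := lt_of_lt_of_le h10 h12
  have hlog : Real.log (y2 / y1) ≤ y2 / y1 - 1 := Real.log_le_sub_one_of_pos (by positivity)
  have hsplit : Real.log (a / y1) - Real.log (a / y2) = Real.log (y2 / y1) := by
    rw [Real.log_div ha.ne' h10.ne', Real.log_div ha.ne' h20.ne', Real.log_div h20.ne' h10.ne']
    ring
  have hfrac : y2 / y1 - 1 = (y2 - y1) / y1 := by field_simp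
  have key : a * ((y2 - y1) / y1) ≤ y2 - y1 := by
    rw [← sub_nonneg]
    have : (y2 - y1) - a * ((y2 - y1) / y1) = (y2 - y1) * ((y1 - a) / y1) := by field_simp
    rw [this]
    apply mul_nonneg (by linarith) (div_nonneg (by linarith) h10.le)
  have hmul := mul_le_mul_of_nonneg_left hlog ha.le
  have h4 : a * Real.log (a / y1) - a * Real.log (a / y2) = a * Real.log (y2 / y1) := by
    have := congrArg (fun t => a * t) hsplit
    simp only [mul_sub] at this
    linarith [this]
  have h6 : a * (y2 / y1 - 1) - a * ((y2 - y1) / y1) = 0 := by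
    field_simp; ring
  linarith [key, h4, hmul, h6]

lemma ga_pos {a y : ℝ} (ha : 0 < a) (hy : 0 < y) (hne : y ≠ a) :
    0 < a * Real.log (a / y) - a + y := by
  have hlog : Real.log (y / a) < y / a - 1 := by
    apply Real.log_lt_sub_one_of_pos (by positivity)
    intro h
    apply hne
    field_simp at h
    linarith
  have hsplit : Real.log (a / y) = - Real.log (y / a) := by
    rw [Real.log_div ha.ne' hy.ne', Real.log_div hy.ne' ha.ne']
    ring
  rw [hsplit]
  have hmul := mul_lt_mul_of_pos_left hlog ha
  have : a * (y / a) = y := by field_simp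
  nlinarith

end Ga


set_option maxHeartbeats 2000000 in
/-- Convergence of Hadamard descent+: if `S₊ ≠ ∅`, `x₀ ∈ ℝⁿ₊₊` and
`x_{k+1} = x_k ∘ (1 - α_k ∇f(x_k) + α_k² ∇f(x_k)²)` with the Polyak-type
stepsize `α_k`, then `(x_k)` converges to some `x* ∈ S₊` and
`min_{0 ≤ i ≤ k} f(x_i) ≤ 4 R (R + ‖x*‖₁) C_A² / (k+1)` where `R = D_h(x*, x₀)`. -/
theorem hadamard_descent_plus_convergence {m n : ℕ} [NeZero n]
    (A : Matrix (Fin m) (Fin n) ℝ) (hA : A ≠ 0) (b : Fin m → ℝ)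
    (hS : ∃ z : Fin n → ℝ, (∀ i, 0 ≤ z i) ∧ A.mulVec z = b)
    (x : ℕ → Fin n → ℝ) (hx0 : ∀ i, 0 < x 0 i)
    (hgrad : ∀ k, gradf A b (x k) ≠ 0)
    (hrec : ∀ k i, x (k + 1) i =
      x k i * (1 - (polyakStep A b (x k)) * gradf A b (x k) i
        + (polyakStep A b (x k)) ^ 2 * (gradf A b (x k) i) ^ 2)) :
    ∃ xstar : Fin n → ℝ, (∀ i, 0 ≤ xstar i) ∧ A.mulVec xstar = b ∧
      Filter.Tendsto x Filter.atTop (nhds xstar) ∧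
      ∀ k : ℕ, (Finset.range (k + 1)).inf' Finset.nonempty_range_add_one
          (fun i => fobj A b (x i)) ≤
        4 * Dh xstar (x 0) * (Dh xstar (x 0) + l1 xstar) * (colNormMax A) ^ 2 / (k + 1) := by
  obtain ⟨z0, hz0, hz0b⟩ := hS
  have hpos : ∀ k i, 0 < x k i := by
    intro k
    induction k with
    | zero => exact hx0
    | succ k ih =>
      intro i
      rw [hrec k i]
      apply mul_pos (ih i)
      nlinarith [sq_nonneg (polyakStep A b (x k) * gradf A b (x k) i - 1/2)]
  have hxnext : ∀ k, x (k+1) = fun i => x k i * (1 - polyakStep A b (x k) * gradf A b (x k) i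
      + polyakStep A b (x k) ^ 2 * (gradf A b (x k) i) ^ 2) := fun k => funext (hrec k)
  have hstep : ∀ z : Fin n → ℝ, (∀ i, 0 ≤ z i) → A.mulVec z = b →
      ∀ k, Dh z (x (k+1)) ≤ Dh z (x k) - polyakStep A b (x k) * fobj A b (x k) := by
    intro z hz hzb k
    rw [hxnext k]
    exact descent_step A b (x k) z hz hzb (hpos k) (hgrad k)
  have hαf_pos : ∀ k, 0 < polyakStep A b (x k) * fobj A b (x k) :=
    fun k => mul_pos (step_pos A b (x k) (hpos k) (hgrad k)) (fobj_pos A b (x k) (hgrad k))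
  have hDanti : ∀ z : Fin n → ℝ, (∀ i, 0 ≤ z i) → A.mulVec z = b →
      Antitone (fun k => Dh z (x k)) := by
    intro z hz hzb
    apply antitone_nat_of_succ_le
    intro k
    show Dh z (x (k+1)) ≤ Dh z (x k)
    have h1 := hstep z hz hzb k
    have h2 := hαf_pos k
    linarith
  have htel : ∀ z : Fin n → ℝ, (∀ i, 0 ≤ z i) → A.mulVec z = b →
      ∀ K, ∑ i ∈ Finset.range K, polyakStep A b (x i) * fobj A b (x i) ≤ Dh z (x 0) := by
    intro z hz hzb K
    have h1 : ∀ K, ∑ i ∈ Finset.range K, polyakStep A b (x i) * fobj A b (x i)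
        ≤ Dh z (x 0) - Dh z (x K) := by
      intro K
      induction K with
      | zero => simp
      | succ K ih =>
        rw [Finset.sum_range_succ]
        have := hstep z hz hzb K
        linarith
    have h2 : 0 ≤ Dh z (x K) := Dh_nonneg z (x K) hz (hpos K)
    linarith [h1 K]
  set M0 := 2 * (Dh z0 (x 0) + ∑ i, z0 i) with hM0def
  have hl1 : ∀ k, ∑ i, x k i ≤ M0 := by
    intro k
    have h1 := l1_bound z0 (x k) hz0 (hpos k)
    have h2 : Dh z0 (x k) ≤ Dh z0 (x 0) := hDanti z0 hz0 hz0b (Nat.zero_le k)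
    rw [hM0def]
    linarith
  have hcoord_le : ∀ k i, x k i ≤ M0 := by
    intro k i
    have h1 : x k i ≤ ∑ i', x k i' :=
      Finset.single_le_sum (f := fun i' => x k i') (fun i' _ => (hpos k i').le)
        (Finset.mem_univ i)
    linarith [hl1 k]
  have hsummable : Summable (fun k => polyakStep A b (x k) * fobj A b (x k)) :=
    summable_of_sum_range_le (fun k => (hαf_pos k).le) (htel z0 hz0 hz0b)
  have hu0 : Filter.Tendsto (fun k => polyakStep A b (x k) * fobj A b (x k))
      Filter.atTop (nhds 0) := hsummable.tendsto_atTop_zero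
  have hbound : ∀ k, fobj A b (x k) ≤
      max (2 * colNormMax A ^ 2 * M0 * (polyakStep A b (x k) * fobj A b (x k)))
        (2 * colNormMax A ^ 2 / 1.79^2 * (polyakStep A b (x k) * fobj A b (x k))^2) :=
    fun k => key_est A b hA (x k) (hpos k) (hgrad k) M0 (hl1 k)
  have hmax0 : Filter.Tendsto (fun k =>
      max (2 * colNormMax A ^ 2 * M0 * (polyakStep A b (x k) * fobj A b (x k)))
        (2 * colNormMax A ^ 2 / 1.79^2 * (polyakStep A b (x k) * fobj A b (x k))^2))
      Filter.atTop (nhds 0) := by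
    have h1 : Filter.Tendsto (fun k => 2 * colNormMax A ^ 2 * M0 *
        (polyakStep A b (x k) * fobj A b (x k))) Filter.atTop (nhds 0) := by
      have := hu0.const_mul (2 * colNormMax A ^ 2 * M0)
      simpa using this
    have h2 : Filter.Tendsto (fun k => 2 * colNormMax A ^ 2 / 1.79^2 *
        (polyakStep A b (x k) * fobj A b (x k))^2) Filter.atTop (nhds 0) := by
      have hsq : Filter.Tendsto (fun k => (polyakStep A b (x k) * fobj A b (x k))^2)
          Filter.atTop (nhds 0) := by
        have := hu0.mul hu0
        simpa [pow_two] using this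
      have := hsq.const_mul (2 * colNormMax A ^ 2 / 1.79^2)
      simpa using this
    have := h1.max h2
    simpa using this
  have hf0 : Filter.Tendsto (fun k => fobj A b (x k)) Filter.atTop (nhds 0) :=
    squeeze_zero (fun k => fobj_nonneg A b (x k)) hbound hmax0
  have hmem : ∀ k, x k ∈ Set.Icc (0 : Fin n → ℝ) (fun _ => M0) := by
    intro k
    rw [Set.mem_Icc]
    exact ⟨fun i => (hpos k i).le, fun i => hcoord_le k i⟩
  obtain ⟨xs, hxsmem, φ, hφ, hconv⟩ :=
    (isCompact_Icc (a := (0 : Fin n → ℝ)) (b := fun _ => M0)).tendsto_subseq hmem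
  have hxs_nonneg : ∀ i, 0 ≤ xs i := fun i => (Set.mem_Icc.mp hxsmem).1 i
  have hconv_coord : ∀ i, Filter.Tendsto (fun j => x (φ j) i) Filter.atTop (nhds (xs i)) := by
    intro i
    exact ((continuous_apply i).tendsto xs).comp hconv
  have hfcont : Continuous (fun y : Fin n → ℝ => fobj A b y) := by
    have heq : (fun y : Fin n → ℝ => fobj A b y)
        = fun y => (1/2) * ∑ j, ((∑ i, A j i * y i) - b j)^2 := by
      funext y
      unfold fobj Matrix.mulVec dotProduct
      simp only [Pi.sub_apply]
    rw [heq]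
    apply Continuous.mul continuous_const
    apply continuous_finset_sum
    intro j _
    apply Continuous.pow
    apply Continuous.sub _ continuous_const
    apply continuous_finset_sum
    intro i _
    exact continuous_const.mul (continuous_apply i)
  have hfxs : fobj A b xs = 0 := by
    have h1 : Filter.Tendsto (fun j => fobj A b (x (φ j))) Filter.atTop (nhds (fobj A b xs)) :=
      (hfcont.tendsto xs).comp hconv
    have h2 : Filter.Tendsto (fun j => fobj A b (x (φ j))) Filter.atTop (nhds 0) :=
      hf0.comp hφ.tendsto_atTop
    exact tendsto_nhds_unique h1 h2
  have hAxs : A.mulVec xs = b := by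
    have hsum0 : ∑ j, ((A.mulVec xs - b) j)^2 = 0 := by
      rw [residual_sq A b xs, hfxs]; ring
    funext j
    have h1 := (Finset.sum_eq_zero_iff_of_nonneg
      (fun j _ => sq_nonneg ((A.mulVec xs - b) j))).mp hsum0 j (Finset.mem_univ j)
    have h2 : (A.mulVec xs - b) j = 0 := by
      exact pow_eq_zero_iff (by norm_num) |>.mp h1
    have h3 : A.mulVec xs j - b j = 0 := by simpa [Pi.sub_apply] using h2
    linarith
  have hD_sub : Filter.Tendsto (fun j => Dh xs (x (φ j))) Filter.atTop (nhds 0) := by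
    have key : Filter.Tendsto
        (fun j => ∑ i, (xs i * Real.log (xs i / x (φ j) i) - xs i + x (φ j) i))
        Filter.atTop (nhds (∑ i : Fin n, (0:ℝ))) := by
      apply tendsto_finset_sum
      intro i _
      rcases eq_or_lt_of_le (hxs_nonneg i) with h | h
      · have heq : (fun j => xs i * Real.log (xs i / x (φ j) i) - xs i + x (φ j) i)
            = fun j => x (φ j) i := by
          funext j; rw [← h]; ring
        rw [heq]
        have := hconv_coord i
        rw [← h] at this
        exact this
      · have hne : xs i ≠ 0 := h.ne'
        have hdiv : Filter.Tendsto (fun j => xs i / x (φ j) i) Filter.atTop (nhds 1) := by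
          have := (tendsto_const_nhds (x := xs i) (f := Filter.atTop (α := ℕ))).div
            (hconv_coord i) hne
          rw [div_self hne] at this
          exact this
        have hlog : Filter.Tendsto (fun j => Real.log (xs i / x (φ j) i))
            Filter.atTop (nhds 0) := by
          have := (Real.continuousAt_log one_ne_zero).tendsto.comp hdiv
          rw [Real.log_one] at this
          exact this
        have := ((tendsto_const_nhds (x := xs i)).mul hlog).sub
          (tendsto_const_nhds (x := xs i)) |>.add (hconv_coord i)
        simpa using this
    simpa [Dh] using key
  have hDlim : Filter.Tendsto (fun k => Dh xs (x k)) Filter.atTop (nhds 0) := by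
    have hanti := hDanti xs hxs_nonneg hAxs
    have hbdd : BddBelow (Set.range fun k => Dh xs (x k)) := by
      refine ⟨0, ?_⟩
      rintro y ⟨k, rfl⟩
      exact Dh_nonneg xs (x k) hxs_nonneg (hpos k)
    have hlim := tendsto_atTop_ciInf hanti hbdd
    have hsub : Filter.Tendsto (fun j => Dh xs (x (φ j))) Filter.atTop
        (nhds (⨅ k, Dh xs (x k))) := hlim.comp hφ.tendsto_atTop
    have heq0 : (⨅ k, Dh xs (x k)) = 0 := tendsto_nhds_unique hsub hD_sub
    rwa [heq0] at hlim
  have hcoordfull : ∀ i, Filter.Tendsto (fun k => x k i) Filter.atTop (nhds (xs i)) := by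
    intro i
    rcases eq_or_lt_of_le (hxs_nonneg i) with h | h
    · have hle : ∀ k, x k i ≤ Dh xs (x k) := by
        intro k
        have hterm := Dh_term_le xs (x k) hxs_nonneg (hpos k) i
        rw [← h] at hterm
        simpa using hterm
      have := squeeze_zero (fun k => (hpos k i).le) hle hDlim
      rwa [← h]
    · rw [Metric.tendsto_atTop]
      intro ε hε
      have hε' : 0 < min ε (xs i / 2) := lt_min hε (by linarith)
      set e := min ε (xs i / 2) with hedef
      have hea : e ≤ xs i / 2 := min_le_right _ _
      have hδ1 : 0 < xs i * Real.log (xs i / (xs i - e)) - xs i + (xs i - e) :=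
        ga_pos h (by linarith) (ne_of_lt (by linarith))
      have hδ2 : 0 < xs i * Real.log (xs i / (xs i + e)) - xs i + (xs i + e) :=
        ga_pos h (by linarith) (ne_of_gt (by linarith))
      set δ := min (xs i * Real.log (xs i / (xs i - e)) - xs i + (xs i - e))
        (xs i * Real.log (xs i / (xs i + e)) - xs i + (xs i + e)) with hδdef
      have hδ0 : 0 < δ := lt_min hδ1 hδ2
      have hev := hDlim.eventually (gt_mem_nhds hδ0)
      obtain ⟨N, hN⟩ := Filter.eventually_atTop.mp hev
      refine ⟨N, fun k hk => ?_⟩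
      have hterm : xs i * Real.log (xs i / x k i) - xs i + x k i ≤ Dh xs (x k) :=
        Dh_term_le xs (x k) hxs_nonneg (hpos k) i
      have hlt : xs i * Real.log (xs i / x k i) - xs i + x k i < δ :=
        lt_of_le_of_lt hterm (hN k hk)
      rw [Real.dist_eq]
      by_contra hcon
      push_neg at hcon
      have habs : e ≤ |x k i - xs i| := le_trans (min_le_left _ _) hcon
      rcases le_or_gt (x k i) (xs i) with hle | hgt
      · have habs' : |x k i - xs i| = xs i - x k i := by
          rw [abs_sub_comm, abs_of_nonneg (by linarith)]
        have hxle : x k i ≤ xs i - e := by rw [habs'] at habs; linarith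
        have hga := ga_anti (hpos k i) hxle (by linarith : xs i - e ≤ xs i)
        have hmin := min_le_left (xs i * Real.log (xs i / (xs i - e)) - xs i + (xs i - e))
          (xs i * Real.log (xs i / (xs i + e)) - xs i + (xs i + e))
        rw [← hδdef] at hmin
        linarith
      · have habs' : |x k i - xs i| = x k i - xs i := by
          rw [abs_of_nonneg (by linarith)]
        have hxge : xs i + e ≤ x k i := by rw [habs'] at habs; linarith
        have hga := ga_mono h (by linarith : xs i ≤ xs i + e) hxge
        have hmin := min_le_right (xs i * Real.log (xs i / (xs i - e)) - xs i + (xs i - e))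
          (xs i * Real.log (xs i / (xs i + e)) - xs i + (xs i + e))
        rw [← hδdef] at hmin
        linarith
  refine ⟨xs, hxs_nonneg, hAxs, tendsto_pi_nhds.mpr hcoordfull, ?_⟩
  intro k
  have hl1xs : l1 xs = ∑ i, xs i := by
    unfold l1
    exact Finset.sum_congr rfl fun i _ => abs_of_nonneg (hxs_nonneg i)
  have hR0 : 0 ≤ Dh xs (x 0) := Dh_nonneg xs (x 0) hxs_nonneg (hpos 0)
  have hL0 : 0 ≤ l1 xs := by
    rw [hl1xs]; exact Finset.sum_nonneg fun i _ => hxs_nonneg i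
  have hl1s : ∀ j, ∑ i, x j i ≤ 2 * (Dh xs (x 0) + l1 xs) := by
    intro j
    have h1 := l1_bound xs (x j) hxs_nonneg (hpos j)
    have h2 : Dh xs (x j) ≤ Dh xs (x 0) := hDanti xs hxs_nonneg hAxs (Nat.zero_le j)
    rw [hl1xs]
    linarith
  have hk1 : (0:ℝ) < (k:ℝ) + 1 := by positivity
  have hex : ∃ i ∈ Finset.range (k+1),
      polyakStep A b (x i) * fobj A b (x i) ≤ Dh xs (x 0) / ((k:ℝ)+1) := by
    by_contra hc
    push_neg at hc
    have hsum := htel xs hxs_nonneg hAxs (k+1)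
    have hlt : (((k:ℝ)+1)) * (Dh xs (x 0) / ((k:ℝ)+1))
        < ∑ i ∈ Finset.range (k+1), polyakStep A b (x i) * fobj A b (x i) := by
      have hconst : ∑ _i ∈ Finset.range (k+1), Dh xs (x 0) / ((k:ℝ)+1)
          = ((k:ℝ)+1) * (Dh xs (x 0) / ((k:ℝ)+1)) := by
        rw [Finset.sum_const, Finset.card_range]
        push_cast
        ring
      rw [← hconst]
      exact Finset.sum_lt_sum_of_nonempty Finset.nonempty_range_add_one fun i hi => hc i hi
    have heqR : ((k:ℝ)+1) * (Dh xs (x 0) / ((k:ℝ)+1)) = Dh xs (x 0) := by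
      field_simp
    linarith
  obtain ⟨i, hi, hile⟩ := hex
  have hu0' : 0 ≤ polyakStep A b (x i) * fobj A b (x i) := (hαf_pos i).le
  have hkey := key_est A b hA (x i) (hpos i) (hgrad i)
    (2 * (Dh xs (x 0) + l1 xs)) (hl1s i)
  have hinf : (Finset.range (k+1)).inf' Finset.nonempty_range_add_one
      (fun i => fobj A b (x i)) ≤ fobj A b (x i) :=
    Finset.inf'_le _ hi
  have hC0 : 0 < colNormMax A := colNormMax_pos A hA
  set R := Dh xs (x 0) with hRdef
  set L := l1 xs with hLdef
  set C := colNormMax A with hCdef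
  set u := polyakStep A b (x i) * fobj A b (x i) with hudef
  have hb1 : 2 * C^2 * (2*(R+L)) * u ≤ 4 * R * (R + L) * C^2 / ((k:ℝ)+1) := by
    have hcoef : (0:ℝ) ≤ 2 * C^2 * (2*(R+L)) :=
      mul_nonneg (by positivity) (by linarith)
    have h1 : 2 * C^2 * (2*(R+L)) * u ≤ 2 * C^2 * (2*(R+L)) * (R/((k:ℝ)+1)) :=
      mul_le_mul_of_nonneg_left hile hcoef
    have h2 : 2 * C^2 * (2*(R+L)) * (R/((k:ℝ)+1)) = 4 * R * (R + L) * C^2 / ((k:ℝ)+1) := by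
      field_simp
      ring
    linarith
  have hb2 : 2 * C^2 / 1.79^2 * u^2 ≤ 4 * R * (R + L) * C^2 / ((k:ℝ)+1) := by
    have hu2 : u^2 ≤ (R/((k:ℝ)+1))^2 := pow_le_pow_left₀ hu0' hile 2
    have hcoef : (0:ℝ) ≤ 2*C^2/1.79^2 := by positivity
    have h2 := mul_le_mul_of_nonneg_left hu2 hcoef
    have h3 : (R/((k:ℝ)+1))^2 ≤ R^2/((k:ℝ)+1) := by
      rw [div_pow]
      apply div_le_div_of_nonneg_left (sq_nonneg R) hk1
      nlinarith [hk1]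
    have h4 : 2*C^2/1.79^2 * (R^2/((k:ℝ)+1)) ≤ 4 * R * (R + L) * C^2 / ((k:ℝ)+1) := by
      have hre : 2*C^2/1.79^2 * (R^2/((k:ℝ)+1)) = (2*C^2/1.79^2 * R^2)/((k:ℝ)+1) := by
        ring
      rw [hre]
      apply div_le_div_of_nonneg_right ?_ hk1.le
      have hA1 : 2*C^2/1.79^2*R^2 = (2/1.79^2)*(R^2*C^2) := by ring
      have hA2 : 4*R*(R+L)*C^2 = 4*(R^2*C^2) + 4*(R*L*C^2) := by ring
      rw [hA1, hA2]
      have e1 : (0:ℝ) ≤ R^2*C^2 := by positivity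
      have e2 : (0:ℝ) ≤ R*L*C^2 := mul_nonneg (mul_nonneg hR0 hL0) (sq_nonneg C)
      have hc : (2:ℝ)/1.79^2 ≤ 4 := by norm_num
      nlinarith [e1, e2, hc]
    have h5 := mul_le_mul_of_nonneg_left h3 hcoef
    linarith
  calc (Finset.range (k+1)).inf' Finset.nonempty_range_add_one (fun i => fobj A b (x i))
      ≤ fobj A b (x i) := hinf
    _ ≤ max (2 * C^2 * (2*(R+L)) * u) (2 * C^2 / 1.79^2 * u^2) := hkey
    _ ≤ 4 * R * (R + L) * C^2 / ((k:ℝ)+1) := max_le hb1 hb2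
end
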